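/- With notation as in the context, let T^c denote the image of T under the composite T → T_E → T_E^c (the second projection of T_E ≅ E × T_E^c). Then the kernel of the surjection T ↠ T^c equals T ∩ eT, and, regarding 𝒪 as a T-algebra via λ, there is an 𝒪-algebra isomorphism 𝒪 ⊗_T T^c ≅ 𝒪/η_λ. -/

import Mathlib

open scoped TensorProduct

section Aux

variable {R A : Type*} [CommRing R] [CommRing A] [Algebra R A] (I : Ideal R)

noncomputable def tensorQuotAux :
    (A ⊗[R] (R ⧸ I)) ≃ₐ[A] A ⧸ Ideal.map (algebraMap R A) I := by
  set J : Ideal A := Ideal.map (algebraMap R A) I with hJ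
  have hg2 : ∀ a ∈ I, (Algebra.ofId R (A ⧸ J)) a = 0 := by
    intro a ha
    show algebraMap R (A ⧸ J) a = 0
    rw [IsScalarTower.algebraMap_apply R A (A ⧸ J)]
    exact Ideal.Quotient.eq_zero_iff_mem.mpr (Ideal.mem_map_of_mem _ ha)
  let g2 : (R ⧸ I) →ₐ[R] A ⧸ J := Ideal.Quotient.liftₐ I (Algebra.ofId R (A ⧸ J)) hg2
  let f : (A ⊗[R] (R ⧸ I)) →ₐ[A] A ⧸ J :=
    Algebra.TensorProduct.lift (Algebra.ofId A (A ⧸ J)) g2 (fun _ _ => Commute.all _ _)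
  have hgker : ∀ a ∈ J, (Algebra.TensorProduct.includeLeft :
      A →ₐ[A] A ⊗[R] (R ⧸ I)) a = 0 := by
    intro a ha
    have : J ≤ RingHom.ker (Algebra.TensorProduct.includeLeft :
        A →ₐ[A] A ⊗[R] (R ⧸ I)) := by
      rw [hJ, Ideal.map_le_iff_le_comap]
      intro r hr
      show (algebraMap R A r) ⊗ₜ[R] (1 : R ⧸ I) = 0
      rw [Algebra.algebraMap_eq_smul_one, TensorProduct.smul_tmul]
      have : (r • (1 : R ⧸ I)) = Ideal.Quotient.mk I r := by
        rw [Algebra.smul_def, mul_one]; rfl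
      rw [this, Ideal.Quotient.eq_zero_iff_mem.mpr hr, TensorProduct.tmul_zero]
    exact this ha
  let g : (A ⧸ J) →ₐ[A] A ⊗[R] (R ⧸ I) :=
    Ideal.Quotient.liftₐ J Algebra.TensorProduct.includeLeft hgker
  refine AlgEquiv.ofAlgHom f g ?_ ?_
  · apply AlgHom.ext
    intro x
    obtain ⟨a, rfl⟩ := Ideal.Quotient.mk_surjective x
    simp only [AlgHom.coe_comp, Function.comp_apply, AlgHom.coe_id, id_eq]
    have h1 : g (Ideal.Quotient.mk J a) = a ⊗ₜ[R] (1 : R ⧸ I) := rfl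
    rw [h1]
    show f (a ⊗ₜ 1) = Ideal.Quotient.mk J a
    rw [Algebra.TensorProduct.lift_tmul, map_one, mul_one]
    rfl
  · apply AlgHom.ext
    intro x
    induction x using TensorProduct.induction_on with
    | zero => simp
    | tmul a b =>
      obtain ⟨r, rfl⟩ := Ideal.Quotient.mk_surjective b
      simp only [AlgHom.coe_comp, Function.comp_apply, AlgHom.coe_id, id_eq]
      have h1 : f (a ⊗ₜ (Ideal.Quotient.mk I r)) =
          Ideal.Quotient.mk J (a * algebraMap R A r) := by
        rw [Algebra.TensorProduct.lift_tmul]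
        show (Ideal.Quotient.mk J a) * (algebraMap R (A ⧸ J) r) = _
        rw [IsScalarTower.algebraMap_apply R A (A ⧸ J)]
        rfl
      rw [h1]
      show (a * algebraMap R A r) ⊗ₜ[R] (1 : R ⧸ I) = _
      rw [mul_comm, ← Algebra.smul_def, TensorProduct.smul_tmul]
      congr 1
      rw [Algebra.smul_def, mul_one]; rfl
    | add x y hx hy => rw [map_add, map_add, hx, hy]

end Aux

/-- In the standard setup (`𝒪` a complete DVR with fraction field `E`,
`T` a commutative reduced finite flat local `𝒪`-algebra, `λ : T → 𝒪`, `e ∈ T_E` the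
idempotent attached to `λ`), let `T^c` be the image of `T` under the second projection
`T → T_E → T_E^c` (i.e. `t ↦ (1-e)·t`, so `T^c = T/K` where
`K = {t : T | (1-e)·t = 0}`).  Then `K = T ∩ eT`, and, regarding `𝒪` as a `T`-algebra
via `λ`, there is an `𝒪`-algebra isomorphism `𝒪 ⊗_T T^c ≅ 𝒪/η_λ`. -/
theorem statement13
    {O : Type*} [CommRing O] [IsDomain O] [IsDiscreteValuationRing O]
    [IsAdicComplete (IsLocalRing.maximalIdeal O) O]
    {E : Type*} [Field E] [Algebra O E] [IsFractionRing O E]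
    {T : Type*} [CommRing T] [IsReduced T] [IsLocalRing T]
    [Algebra O T] [Module.Finite O T] [Module.Flat O T]
    (lam : T →ₐ[O] O)
    [Algebra T O] (halg : ∀ t : T, algebraMap T O t = lam t)
    {TE : Type*} [CommRing TE] [Algebra T TE] [Algebra O TE] [Algebra E TE]
    [IsScalarTower O T TE] [IsScalarTower O E TE]
    [IsLocalization (Algebra.algebraMapSubmonoid T (nonZeroDivisors O)) TE]
    (lamE : TE →ₐ[E] E) (e : TE)
    (hlamE : ∀ t : T, lamE (algebraMap T TE t) = algebraMap O E (lam t))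
    (he1 : lamE e = 1)
    (he2 : ∀ P : Ideal TE, P.IsPrime → P ≠ RingHom.ker lamE → e ∈ P) :
    (∀ t : T, ((1 - e) * algebraMap T TE t = 0) ↔
        (∃ t' : T, algebraMap T TE t = e * algebraMap T TE t')) ∧
    Nonempty ((O ⊗[T]
        (T ⧸ (Ideal.comap (algebraMap T TE) (Submodule.annihilator (Ideal.span {1 - e})))))
      ≃ₐ[O] (O ⧸ Ideal.map lam (Submodule.annihilator (RingHom.ker lam)))) := by
  set M := Algebra.algebraMapSubmonoid T (nonZeroDivisors O) with hM
  -- scalars act regularly on T (flatness)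
  have hreg : ∀ c : O, c ≠ 0 → IsSMulRegular T c := by
    intro c hc
    have h0 : IsSMulRegular O c := by
      intro a b hab
      simpa using mul_left_cancel₀ hc (by simpa [smul_eq_mul] using hab)
    have h1 : IsSMulRegular (O ⊗[O] T) c := h0.rTensor T
    intro a b hab
    have h2 : (TensorProduct.lid O T).symm (c • a) = (TensorProduct.lid O T).symm (c • b) :=
      congrArg _ hab
    rw [map_smul, map_smul] at h2
    exact (TensorProduct.lid O T).symm.injective (h1 h2)
  have hMle : M ≤ nonZeroDivisors T := by
    intro x hx
    obtain ⟨c, hc, rfl⟩ := hx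
    rw [mem_nonZeroDivisors_iff_right]
    intro t ht
    rw [mul_comm, ← Algebra.smul_def] at ht
    exact hreg c (mem_nonZeroDivisors_iff_ne_zero.mp hc) (by simpa using ht)
  have hinj : Function.Injective (algebraMap T TE) := IsLocalization.injective TE hMle
  have hred : IsReduced TE := by
    constructor
    intro x hx
    obtain ⟨⟨t, s⟩, rfl⟩ := IsLocalization.mk'_surjective M x
    dsimp only at hx ⊢
    obtain ⟨n, hn⟩ := hx
    have hts : IsLocalization.mk' TE t s * algebraMap T TE (s : T) = algebraMap T TE t :=
      IsLocalization.mk'_spec TE t s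
    have htn : algebraMap T TE (t ^ n) = 0 := by
      rw [map_pow, ← hts, mul_pow, hn, zero_mul]
    have ht0 : t = 0 := by
      have h5 : algebraMap T TE (t ^ n) = algebraMap T TE 0 := by rw [map_zero]; exact htn
      exact IsReduced.eq_zero t ⟨n, hinj h5⟩
    rw [IsLocalization.mk'_eq_zero_iff]
    exact ⟨1, by simp [ht0]⟩
  -- key vanishing lemma: elements of ker lamE killed by e
  have hzero : ∀ x : TE, (∀ P : Ideal TE, P.IsPrime → x ∈ P) → x = 0 := by
    intro x hx
    have : x ∈ nilradical TE := by
      rw [nilradical_eq_sInf]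
      exact Ideal.mem_sInf.mpr fun {P} hP => hx P hP
    rw [nilradical_eq_zero TE] at this
    simpa using this
  have hkerprime : (RingHom.ker lamE).IsPrime := RingHom.ker_isPrime lamE
  have hek : ∀ x : TE, lamE x = 0 → e * x = 0 := by
    intro x hx
    apply hzero
    intro P hP
    by_cases hPk : P = RingHom.ker lamE
    · subst hPk
      exact Ideal.mul_mem_left _ e hx
    · exact Ideal.mul_mem_right _ _ (he2 P hP hPk)
  have hidem : (1 - e) * e = 0 := by
    have := hek (1 - e) (by rw [map_sub, map_one, he1, sub_self])
    linear_combination this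
  have hkermem : ∀ t : T, lamE (algebraMap T TE t) = 0 ↔ lam t = 0 := by
    intro t
    rw [hlamE]
    constructor
    · intro h
      have := IsFractionRing.injective O E (by simpa using h)
      simpa using this
    · intro h; rw [h, map_zero]
  -- part 1
  have part1 : ∀ t : T, ((1 - e) * algebraMap T TE t = 0) ↔
      (∃ t' : T, algebraMap T TE t = e * algebraMap T TE t') := by
    intro t
    constructor
    · intro h
      exact ⟨t, by linear_combination h⟩
    · rintro ⟨t', ht'⟩
      rw [ht', ← mul_assoc, hidem, zero_mul]
  refine ⟨part1, ?_⟩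
  -- the kernel ideal equals the annihilator of ker lam
  have hK : Ideal.comap (algebraMap T TE) (Submodule.annihilator (Ideal.span {1 - e}))
      = Submodule.annihilator (RingHom.ker (lam : T →+* O)) := by
    ext t
    rw [Ideal.mem_comap, ← Ideal.submodule_span_eq,
      Submodule.mem_annihilator_span_singleton, smul_eq_mul, Submodule.mem_annihilator]
    constructor
    · intro h k hk
      have hk0 : lam k = 0 := hk
      have h2 : e * algebraMap T TE k = 0 := hek _ ((hkermem k).mpr hk0)
      have h3 : algebraMap T TE (t * k) = 0 := by
        rw [map_mul]
        calc algebraMap T TE t * algebraMap T TE k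
            = (algebraMap T TE t * (1 - e) + algebraMap T TE t * e) * algebraMap T TE k := by ring
          _ = algebraMap T TE t * (e * algebraMap T TE k) := by rw [h, zero_add]; ring
          _ = 0 := by rw [h2, mul_zero]
      have h5 : algebraMap T TE (t * k) = algebraMap T TE 0 := by rw [map_zero]; exact h3
      simpa [smul_eq_mul] using hinj h5
    · intro h
      obtain ⟨⟨k, s⟩, hks⟩ := IsLocalization.mk'_surjective M (1 - e)
      have hspec : (1 - e) * algebraMap T TE s = algebraMap T TE k := by
        rw [← hks]; exact IsLocalization.mk'_spec TE k s
      have hlk : lam k = 0 := by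
        rw [← hkermem]
        rw [← hspec, map_mul, map_sub, map_one, he1, sub_self, zero_mul]
      have htk : t * k = 0 := by simpa [smul_eq_mul] using h k hlk
      have h4 : (algebraMap T TE t * (1 - e)) * algebraMap T TE s = 0 := by
        rw [mul_assoc, hspec, ← map_mul, htk, map_zero]
      have hu : IsUnit (algebraMap T TE (s : T)) := IsLocalization.map_units TE s
      exact (hu.mul_left_eq_zero).mp h4
  rw [hK]
  set I : Ideal T := Ideal.comap (algebraMap T TE) (Submodule.annihilator (Ideal.span {1 - e}))
  have hmapeq : Ideal.map (algebraMap T O) (Submodule.annihilator (RingHom.ker (lam : T →+* O)))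
      = Ideal.map lam (Submodule.annihilator (RingHom.ker (lam : T →+* O))) := by
    have hfeq : (algebraMap T O : T → O) = ⇑lam := funext halg
    simp only [Ideal.map, hfeq]
  exact ⟨(tensorQuotAux (A := O) (Submodule.annihilator (RingHom.ker (lam : T →+* O)))).trans
    (Ideal.quotientEquivAlgOfEq O hmapeq)⟩
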